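/- In the setting of the previous negative-multinomial construction with i.i.d. unit vectors (ξ_k) but where the first M vectors ξ_1,…,ξ_M have possibly different distributions q_1,…,q_M on {e_1,…,e_{L+1}} and ξ_k for k > M are i.i.d. with distribution ν̃ (ν̃(e_{L+1}) = ν(1) > 0, ν̃(e_ℓ) = ν(−ℓ)), the count A_ℓ(M−1) of type-ℓ failures before the M-th success satisfies E[A_ℓ(M−1)] = Σ_{i=1}^M ( q_i(−ℓ) + ρ_ℓ·(1 − q_i(1)) ), where ρ_ℓ = ν(−ℓ)/ν(1). -/

import Mathlib

open MeasureTheory ProbabilityTheory Finset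
open scoped ENNReal NNReal

private lemma sum_Icc_one_eq_range {M : Type*} [AddCommMonoid M] (g : ℕ → M) (m : ℕ) :
    ∑ k ∈ Finset.Icc 1 m, g k = ∑ j ∈ Finset.range m, g (j + 1) := by
  induction m with
  | zero => simp
  | succ m ih =>
      rw [← Finset.insert_Icc_right_eq_Icc_add_one (by omega), Finset.sum_insert (by simp),
        Finset.sum_range_succ, ih, add_comm]

theorem stmt17 {Ω : Type*} [MeasurableSpace Ω] (μ : Measure Ω) [IsProbabilityMeasure μ]
    (L : ℕ) (hL : 0 < L) (M : ℕ) (hM : 1 ≤ M)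
    (ξ : ℕ → Ω → Fin (L + 1))
    (hmeas : ∀ k, Measurable (ξ k))
    (hindep : iIndepFun ξ μ)
    (q1 : ℕ → ℝ) (qneg : ℕ → Fin L → ℝ) (ν1 : ℝ) (νneg : Fin L → ℝ)
    (hν1 : 0 < ν1)
    (hdistq : ∀ i, 1 ≤ i → i ≤ M →
      (∀ ℓ : Fin L, (μ {ω | ξ i ω = Fin.castSucc ℓ}).toReal = qneg i ℓ) ∧
        (μ {ω | ξ i ω = Fin.last L}).toReal = q1 i)
    (hdistν : ∀ k, M < k →
      (∀ ℓ : Fin L, (μ {ω | ξ k ω = Fin.castSucc ℓ}).toReal = νneg ℓ) ∧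
        (μ {ω | ξ k ω = Fin.last L}).toReal = ν1)
    (γ : Ω → ℕ)
    (hγ : ∀ ω, γ ω = sInf {n | 1 ≤ n ∧
      ((Finset.Icc 1 n).filter (fun k => ξ k ω = Fin.last L)).card = M})
    (A : Fin L → Ω → ℕ)
    (hA : ∀ ℓ ω, A ℓ ω =
      ((Finset.Icc 1 (γ ω)).filter (fun k => ξ k ω = Fin.castSucc ℓ)).card)
    (ℓ : Fin L) :
    ∫ ω, (A ℓ ω : ℝ) ∂μ
      = ∑ i ∈ Finset.Icc 1 M, (qneg i ℓ + (νneg ℓ / ν1) * (1 - q1 i)) := by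
  classical
  set N : ℕ → Ω → ℕ :=
    fun n ω => ((Finset.Icc 1 n).filter (fun k => ξ k ω = Fin.last L)).card with hN
  -- basic facts about N
  have hNstep : ∀ n ω, N (n+1) ω = N n ω + (if ξ (n+1) ω = Fin.last L then 1 else 0) := by
    intro n ω
    simp only [hN]
    rw [← Finset.insert_Icc_right_eq_Icc_add_one (by omega), Finset.filter_insert]
    split
    · rw [Finset.card_insert_of_notMem (by simp)]
    · simp
  have hN0 : ∀ ω, N 0 ω = 0 := by intro ω; simp [hN]
  have hNle : ∀ n ω, N n ω ≤ n := by
    intro n ω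
    calc N n ω ≤ (Finset.Icc 1 n).card := Finset.card_filter_le _ _
    _ = n := by rw [Nat.card_Icc]; omega
  have hNmono : ∀ ω, Monotone fun n => N n ω := by
    intro ω
    apply monotone_nat_of_le_succ
    intro n
    rw [hNstep n ω]; omega
  have hNmeas : ∀ n, Measurable (N n) := by
    intro n
    induction n with
    | zero => simpa [hN] using measurable_const
    | succ n ih =>
        have : N (n+1) = fun ω => N n ω + (if ξ (n+1) ω = Fin.last L then 1 else 0) := by
          funext ω; exact hNstep n ω
        rw [this]
        exact ih.add (Measurable.ite ((hmeas (n+1)) (MeasurableSet.singleton _))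
          measurable_const measurable_const)
  have hPmeas : ∀ n, MeasurableSet {ω | N n ω < M} := by
    intro n
    have h : {ω | N n ω < M} = N n ⁻¹' (Set.Iio M) := rfl
    rw [h]
    exact (hNmeas n) MeasurableSet.of_discrete
  -- independence
  have hfac : ∀ n k, n < k → ∀ c : Fin (L+1),
      μ ({ω | N n ω < M} ∩ ξ k ⁻¹' {c}) = μ {ω | N n ω < M} * μ (ξ k ⁻¹' {c}) := by
    intro n k hnk c
    have hdisj : Disjoint (Finset.Icc 1 n) ({k} : Finset ℕ) := by
      simp only [Finset.disjoint_singleton_right, Finset.mem_Icc]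
      omega
    have h1 := hindep.indepFun_finset (Finset.Icc 1 n) {k} hdisj hmeas
    have h2 : IndepFun (fun ω (i : ↥(Finset.Icc 1 n)) => ξ (↑i) ω) (ξ k) μ := by
      have h3 := h1.comp measurable_id
        (measurable_pi_apply (⟨k, Finset.mem_singleton_self k⟩ : ({k} : Finset ℕ)))
      exact h3
    have h4 : {ω | N n ω < M} = (fun ω (i : ↥(Finset.Icc 1 n)) => ξ (↑i) ω) ⁻¹'
        {v | (Finset.univ.filter (fun i : ↥(Finset.Icc 1 n) => v i = Fin.last L)).card < M} := by
      ext ω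
      simp only [Set.mem_preimage, Set.mem_setOf_eq]
      have hcard : (Finset.univ.filter
          (fun i : ↥(Finset.Icc 1 n) => ξ (↑i) ω = Fin.last L)).card = N n ω := by
        rw [Finset.univ_eq_attach,
          Finset.filter_attach (fun k => ξ k ω = Fin.last L) (Finset.Icc 1 n),
          Finset.card_map, Finset.card_attach]
      rw [hcard]
    rw [h4]
    exact h2.measure_inter_preimage_eq_mul _ _ MeasurableSet.of_discrete
      MeasurableSet.of_discrete
  -- the real sequence a
  set a : ℕ → ℝ := fun n => (μ {ω | N n ω < M}).toReal with ha
  have ha_nonneg : ∀ n, 0 ≤ a n := fun n => ENNReal.toReal_nonneg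
  have ha_one : ∀ n, n < M → a n = 1 := by
    intro n hn
    have : {ω | N n ω < M} = Set.univ := by
      ext ω; simp only [Set.mem_setOf_eq, Set.mem_univ, iff_true]
      exact lt_of_le_of_lt (hNle n ω) hn
    simp [ha, this]
  -- the sequence f
  set f : ℕ → ℝ := fun n => ∫ ω, ((M - N n ω : ℕ) : ℝ) ∂μ with hf
  have hint : ∀ n, Integrable (fun ω => ((M - N n ω : ℕ) : ℝ)) μ := by
    intro n
    have hm : Measurable (fun ω => ((M - N n ω : ℕ) : ℝ)) :=
      (measurable_from_top (f := fun x : ℕ => ((M - x : ℕ) : ℝ))).comp (hNmeas n)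
    refine ⟨hm.aestronglyMeasurable,
      HasFiniteIntegral.of_bounded (C := (M : ℝ)) (Filter.Eventually.of_forall fun ω => ?_)⟩
    rw [Real.norm_eq_abs, abs_of_nonneg (by positivity)]
    exact_mod_cast Nat.sub_le M (N n ω)
  have hrec : ∀ n, M ≤ n → f (n+1) = f n - ν1 * a n := by
    intro n hn
    set S : Set Ω := {ω | N n ω < M} ∩ ξ (n+1) ⁻¹' {Fin.last L} with hS
    have hSmeas : MeasurableSet S :=
      (hPmeas n).inter ((hmeas (n+1)) (MeasurableSet.singleton _))
    have hpt : ∀ ω, ((M - N (n+1) ω : ℕ) : ℝ)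
        = ((M - N n ω : ℕ) : ℝ) - Set.indicator S (fun _ => (1:ℝ)) ω := by
      intro ω
      rw [Set.indicator_apply]
      by_cases h1 : N n ω < M
      · by_cases h2 : ξ (n+1) ω = Fin.last L
        · have hmem : ω ∈ S := ⟨h1, h2⟩
          rw [if_pos hmem, hNstep n ω, if_pos h2,
            Nat.cast_sub (by omega), Nat.cast_sub (by omega)]
          push_cast
          ring
        · have hmem : ω ∉ S := fun hc => h2 hc.2
          rw [if_neg hmem, hNstep n ω, if_neg h2]
          simp
      · have hmem : ω ∉ S := fun hc => h1 hc.1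
        rw [if_neg hmem]
        have h3 : M ≤ N (n+1) ω := le_trans (not_lt.mp h1) (hNmono ω (Nat.le_succ n))
        rw [Nat.sub_eq_zero_of_le (not_lt.mp h1), Nat.sub_eq_zero_of_le h3]
        simp
    have hInd : Integrable (Set.indicator S (fun _ => (1:ℝ))) μ :=
      (integrable_const 1).indicator hSmeas
    have hfs : f (n+1)
        = ∫ ω, (((M - N n ω : ℕ) : ℝ) - Set.indicator S (fun _ => (1:ℝ)) ω) ∂μ :=
      integral_congr_ae (Filter.Eventually.of_forall hpt)
    rw [hfs, integral_sub (hint n) hInd, integral_indicator_const _ hSmeas, smul_eq_mul,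
      mul_one, measureReal_def, hS, hfac n (n+1) (by omega) (Fin.last L), ENNReal.toReal_mul]
    have hν : (μ (ξ (n+1) ⁻¹' {Fin.last L})).toReal = ν1 := (hdistν (n+1) (by omega)).2
    rw [hν]
    ring
  have htel : ∀ j, f M = f (M + j) + ν1 * ∑ i ∈ Finset.range j, a (M + i) := by
    intro j
    induction j with
    | zero => simp
    | succ j ih =>
        rw [Finset.sum_range_succ, ih, show M + (j+1) = (M+j)+1 from rfl,
          hrec (M + j) (Nat.le_add_right _ _)]
        ring
  have hf_nonneg : ∀ n, 0 ≤ f n :=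
    fun n => integral_nonneg fun ω => by positivity
  have hf_le : ∀ n, f n ≤ M * a n := by
    intro n
    have hpt : ∀ ω, ((M - N n ω : ℕ) : ℝ)
        ≤ Set.indicator {ω | N n ω < M} (fun _ => (M:ℝ)) ω := by
      intro ω
      rw [Set.indicator_apply]
      split
      · exact_mod_cast Nat.sub_le M (N n ω)
      · next h =>
          rw [Nat.sub_eq_zero_of_le (not_lt.mp fun hc => h hc)]
          simp
    calc f n ≤ ∫ ω, Set.indicator {ω | N n ω < M} (fun _ => (M:ℝ)) ω ∂μ :=
        integral_mono (hint n) ((integrable_const _).indicator (hPmeas n)) hpt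
    _ = M * a n := by
        rw [integral_indicator_const _ (hPmeas n), smul_eq_mul, measureReal_def]
        ring
  have hsum : Summable (fun i => a (M + i)) := by
    apply summable_of_sum_range_le (fun i => ha_nonneg _) (c := f M / ν1)
    intro j
    have h := htel j
    have h2 := hf_nonneg (M + j)
    rw [le_div_iff₀ hν1]
    nlinarith
  have ha0 : Filter.Tendsto (fun i => a (M + i)) Filter.atTop (nhds 0) :=
    hsum.tendsto_atTop_zero
  have hf0 : Filter.Tendsto (fun j => f (M + j)) Filter.atTop (nhds 0) := by
    refine squeeze_zero (fun j => hf_nonneg _) (fun j => hf_le _) ?_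
    have := ha0.const_mul (M : ℝ)
    simpa using this
  have htail : ν1 * ∑' i, a (M + i) = f M := by
    have h1 : Filter.Tendsto (fun j => f (M + j) + ν1 * ∑ i ∈ Finset.range j, a (M + i))
        Filter.atTop (nhds (0 + ν1 * ∑' i, a (M + i))) :=
      hf0.add ((hsum.hasSum.tendsto_sum_nat).const_mul ν1)
    have h2 : Filter.Tendsto (fun j : ℕ => f M) Filter.atTop (nhds (f M)) :=
      tendsto_const_nhds
    have h3 := tendsto_nhds_unique (h1.congr (fun j => (htel j).symm)) h2
    rw [← h3, zero_add]
  have hfM : f M = ∑ i ∈ Finset.Icc 1 M, (1 - q1 i) := by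
    have hpt : ∀ ω, ((M - N M ω : ℕ) : ℝ)
        = ∑ k ∈ Finset.Icc 1 M,
            (1 - Set.indicator (ξ k ⁻¹' {Fin.last L}) (fun _ => (1:ℝ)) ω) := by
      intro ω
      rw [Finset.sum_sub_distrib, Nat.cast_sub (hNle M ω)]
      have h1 : ∑ _k ∈ Finset.Icc 1 M, (1:ℝ) = M := by
        simp [Nat.card_Icc]
      have h2 : (N M ω : ℝ) = ∑ k ∈ Finset.Icc 1 M,
          Set.indicator (ξ k ⁻¹' {Fin.last L}) (fun _ => (1:ℝ)) ω := by
        simp only [hN]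
        rw [Finset.natCast_card_filter]
        refine Finset.sum_congr rfl fun k _ => ?_
        rw [Set.indicator_apply]
        exact if_congr Iff.rfl rfl rfl
      rw [h1, h2]
    have hfs : f M = ∫ ω, (∑ k ∈ Finset.Icc 1 M,
        (1 - Set.indicator (ξ k ⁻¹' {Fin.last L}) (fun _ => (1:ℝ)) ω)) ∂μ :=
      integral_congr_ae (Filter.Eventually.of_forall hpt)
    have hIFS := integral_finset_sum (μ := μ) (s := Finset.Icc 1 M)
      (f := fun k ω => (1:ℝ) - Set.indicator (ξ k ⁻¹' {Fin.last L}) (fun _ => (1:ℝ)) ω)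
      (fun k _ => by
        exact (integrable_const 1).sub ((integrable_const 1).indicator
          ((hmeas k) (MeasurableSet.singleton _))))
    rw [hfs, hIFS]
    refine Finset.sum_congr rfl fun k hk => ?_
    rw [Finset.mem_Icc] at hk
    rw [integral_sub (integrable_const 1) ((integrable_const 1).indicator
      ((hmeas k) (MeasurableSet.singleton _))),
      integral_indicator_const _ ((hmeas k) (MeasurableSet.singleton _)),
      integral_const, smul_eq_mul, smul_eq_mul, mul_one, mul_one, measureReal_def, measureReal_def, measure_univ,
      ENNReal.toReal_one]
    have hq : (μ (ξ k ⁻¹' {Fin.last L})).toReal = q1 k := (hdistq k hk.1 hk.2).2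
    rw [hq]
  -- a.e. identification of A with a sum of indicators
  set G : Set Ω := {ω | ∃ n, M ≤ N n ω} with hG
  have hGc : μ Gᶜ = 0 := by
    have hsub : ∀ i : ℕ, Gᶜ ⊆ {ω | N (M + i) ω < M} := by
      intro i ω hω
      simp only [hG, Set.mem_compl_iff, Set.mem_setOf_eq, not_exists, not_le] at hω
      exact hω (M + i)
    have hle : ∀ i, (μ Gᶜ).toReal ≤ a (M + i) := fun i =>
      ENNReal.toReal_mono (measure_ne_top μ _) (measure_mono (hsub i))
    have h0 : (μ Gᶜ).toReal ≤ 0 := ge_of_tendsto' ha0 hle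
    have h1 : (μ Gᶜ).toReal = 0 := le_antisymm h0 ENNReal.toReal_nonneg
    exact ((ENNReal.toReal_eq_zero_iff _).mp h1).resolve_right (measure_ne_top μ _)
  set E : ℕ → Set Ω := fun j => {ω | ξ (j+1) ω = Fin.castSucc ℓ} ∩ {ω | N j ω < M} with hE
  have hEmeas : ∀ j, MeasurableSet (E j) :=
    fun j => (((hmeas (j+1)) (MeasurableSet.singleton _))).inter (hPmeas j)
  have hhit : ∀ ω n, M ≤ N n ω → ∃ m, 1 ≤ m ∧ m ≤ n ∧ N m ω = M := by
    intro ω n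
    induction n with
    | zero => intro h; rw [hN0 ω] at h; omega
    | succ n ih =>
        intro h
        by_cases h' : M ≤ N n ω
        · obtain ⟨m, h1, h2, h3⟩ := ih h'
          exact ⟨m, h1, by omega, h3⟩
        · refine ⟨n+1, by omega, le_refl _, ?_⟩
          have hs := hNstep n ω
          have hb : (if ξ (n+1) ω = Fin.last L then 1 else 0) ≤ 1 := by split <;> omega
          omega
  have hγ_lb : ∀ ω, ω ∈ G → ∀ m, m < γ ω → N m ω < M := by
    intro ω hω m hm
    by_contra h'
    push_neg at h'
    obtain ⟨m', h1, h2, h3⟩ := hhit ω m h'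
    have hle : γ ω ≤ m' := by
      rw [hγ ω]
      exact Nat.sInf_le ⟨h1, h3⟩
    omega
  have hγ_mem : ∀ ω, ω ∈ G → 1 ≤ γ ω ∧ N (γ ω) ω = M := by
    intro ω hω
    obtain ⟨n, hn⟩ := hω
    obtain ⟨m, h1, h2, h3⟩ := hhit ω n hn
    have hne : {n | 1 ≤ n ∧ N n ω = M}.Nonempty := ⟨m, h1, h3⟩
    rw [hγ ω]
    exact Nat.sInf_mem hne
  have hAeq : ∀ ω ∈ G, (A ℓ ω : ℝ≥0∞) = ∑' j, (E j).indicator (fun _ => (1:ℝ≥0∞)) ω := by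
    intro ω hω
    have hiff : ∀ j : ℕ, ω ∈ E j ↔ (ξ (j+1) ω = Fin.castSucc ℓ ∧ j + 1 ≤ γ ω) := by
      intro j
      simp only [hE, Set.mem_inter_iff, Set.mem_setOf_eq]
      constructor
      · rintro ⟨h1, h2⟩
        refine ⟨h1, ?_⟩
        by_contra hc
        push_neg at hc
        have hm := (hγ_mem ω hω).2
        have hmono : N (γ ω) ω ≤ N j ω := hNmono ω (show γ ω ≤ j by omega)
        omega
      · rintro ⟨h1, h2⟩
        exact ⟨h1, hγ_lb ω hω j (by omega)⟩
    have hzero : ∀ j ∉ Finset.range (γ ω), (E j).indicator (fun _ => (1:ℝ≥0∞)) ω = 0 := by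
      intro j hj
      simp only [Finset.mem_range, not_lt] at hj
      rw [Set.indicator_apply_eq_zero]
      intro hmem
      exact absurd ((hiff j).mp hmem).2 (by omega)
    rw [tsum_eq_sum hzero]
    have hcong : ∀ j ∈ Finset.range (γ ω), (E j).indicator (fun _ => (1:ℝ≥0∞)) ω
        = if ξ (j+1) ω = Fin.castSucc ℓ then 1 else 0 := by
      intro j hj
      simp only [Finset.mem_range] at hj
      rw [Set.indicator_apply]
      refine if_congr ?_ rfl rfl
      rw [hiff j]
      simp only [and_iff_left_iff_imp]
      intro _
      omega
    rw [Finset.sum_congr rfl hcong, hA ℓ ω, Finset.natCast_card_filter,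
      sum_Icc_one_eq_range]
  set F : Ω → ℝ≥0∞ := fun ω => ∑' j, (E j).indicator (fun _ => (1:ℝ≥0∞)) ω with hF
  have hFmeas : Measurable F :=
    Measurable.ennreal_tsum fun j => (measurable_const).indicator (hEmeas j)
  have haeF : ∀ᵐ ω ∂μ, (A ℓ ω : ℝ≥0∞) = F ω := by
    rw [ae_iff]
    refine measure_mono_null ?_ hGc
    intro ω hω
    simp only [Set.mem_setOf_eq] at hω
    intro hωG
    exact hω (hAeq ω hωG)
  have hstep1 : ∫ ω, (A ℓ ω : ℝ) ∂μ = (∫⁻ ω, F ω ∂μ).toReal := by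
    have h1 : ∫ ω, (A ℓ ω : ℝ) ∂μ = ∫ ω, (F ω).toReal ∂μ := by
      refine integral_congr_ae ?_
      filter_upwards [haeF] with ω hω
      rw [← hω, ENNReal.toReal_natCast]
    rw [h1, integral_toReal hFmeas.aemeasurable ?_]
    filter_upwards [haeF] with ω hω
    rw [← hω]
    exact ENNReal.natCast_lt_top _
  have hstep2 : ∫⁻ ω, F ω ∂μ = ∑' j, μ (E j) := by
    rw [hF, lintegral_tsum fun j => ((measurable_const).indicator (hEmeas j)).aemeasurable]
    congr 1
    funext j
    rw [lintegral_indicator_const (hEmeas j), one_mul]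
  set r : ℕ → ℝ := fun j => (if j + 1 ≤ M then qneg (j+1) ℓ else νneg ℓ) * a j with hr
  have hμE : ∀ j, μ (E j) = ENNReal.ofReal (r j) := by
    intro j
    have h1 : μ (E j) = μ {ω | N j ω < M} * μ (ξ (j+1) ⁻¹' {Fin.castSucc ℓ}) := by
      simp only [hE]
      rw [show ({ω | ξ (j+1) ω = Fin.castSucc ℓ} ∩ {ω | N j ω < M})
        = ({ω | N j ω < M} ∩ ξ (j+1) ⁻¹' {Fin.castSucc ℓ}) from Set.inter_comm _ _]
      exact hfac j (j+1) (by omega) _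
    have hfin : μ {ω | N j ω < M} * μ (ξ (j+1) ⁻¹' {Fin.castSucc ℓ}) ≠ ⊤ :=
      ENNReal.mul_ne_top (measure_ne_top μ _) (measure_ne_top μ _)
    rw [h1, ← ENNReal.ofReal_toReal hfin, ENNReal.toReal_mul]
    congr 1
    simp only [hr]
    by_cases hj : j + 1 ≤ M
    · rw [if_pos hj]
      have hq : (μ (ξ (j+1) ⁻¹' {Fin.castSucc ℓ})).toReal = qneg (j+1) ℓ :=
        (hdistq (j+1) (by omega) hj).1 ℓ
      rw [hq, mul_comm]
    · rw [if_neg hj]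
      have hq : (μ (ξ (j+1) ⁻¹' {Fin.castSucc ℓ})).toReal = νneg ℓ :=
        (hdistν (j+1) (by omega)).1 ℓ
      rw [hq, mul_comm]
  have hq_nonneg : ∀ j : ℕ, 0 ≤ (if j + 1 ≤ M then qneg (j+1) ℓ else νneg ℓ) := by
    intro j
    split
    · next hj => rw [← (hdistq (j+1) (by omega) hj).1 ℓ]; exact ENNReal.toReal_nonneg
    · next hj => rw [← (hdistν (j+1) (by omega)).1 ℓ]; exact ENNReal.toReal_nonneg
  have hq_le_one : ∀ j : ℕ, (if j + 1 ≤ M then qneg (j+1) ℓ else νneg ℓ) ≤ 1 := by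
    intro j
    have hb : ∀ s : Set Ω, (μ s).toReal ≤ 1 := fun s => by
      rw [show (1:ℝ) = (1:ℝ≥0∞).toReal from ENNReal.toReal_one.symm]
      exact ENNReal.toReal_mono ENNReal.one_ne_top prob_le_one
    split
    · next hj => rw [← (hdistq (j+1) (by omega) hj).1 ℓ]; exact hb _
    · next hj => rw [← (hdistν (j+1) (by omega)).1 ℓ]; exact hb _
  have hr_nonneg : ∀ j, 0 ≤ r j := by
    intro j
    simp only [hr]
    exact mul_nonneg (hq_nonneg j) (ha_nonneg j)
  have hasum : Summable a := by
    have heq : (fun i => a (i + M)) = fun i => a (M + i) := by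
      funext i; rw [add_comm]
    exact (summable_nat_add_iff M).mp (heq ▸ hsum)
  have hrsum : Summable r := by
    refine Summable.of_nonneg_of_le hr_nonneg (fun j => ?_) hasum
    simp only [hr]
    calc (if j + 1 ≤ M then qneg (j+1) ℓ else νneg ℓ) * a j
        ≤ 1 * a j := mul_le_mul_of_nonneg_right (hq_le_one j) (ha_nonneg j)
    _ = a j := one_mul _
  have hfinal : ∑' j, r j = ∑ i ∈ Finset.Icc 1 M, (qneg i ℓ + (νneg ℓ / ν1) * (1 - q1 i)) := by
    rw [← Summable.sum_add_tsum_nat_add M hrsum]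
    have h1 : ∑ j ∈ Finset.range M, r j = ∑ i ∈ Finset.Icc 1 M, qneg i ℓ := by
      rw [sum_Icc_one_eq_range (fun i => qneg i ℓ) M]
      refine Finset.sum_congr rfl fun j hj => ?_
      simp only [Finset.mem_range] at hj
      simp only [hr]
      rw [if_pos (by omega), ha_one j hj, mul_one]
    have h2 : ∑' i, r (i + M) = νneg ℓ * ∑' i, a (M + i) := by
      rw [← tsum_mul_left]
      refine tsum_congr fun i => ?_
      simp only [hr]
      rw [if_neg (by omega), add_comm i M]
    have h3 : ∑' i, a (M + i) = f M / ν1 := by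
      rw [eq_div_iff hν1.ne']
      linarith [htail]
    rw [h1, h2, h3, hfM, Finset.sum_add_distrib]
    congr 1
    have h4 : νneg ℓ * ((∑ i ∈ Finset.Icc 1 M, (1 - q1 i)) / ν1)
        = (νneg ℓ / ν1) * ∑ i ∈ Finset.Icc 1 M, (1 - q1 i) := by ring
    rw [h4, Finset.mul_sum]
  rw [hstep1, hstep2]
  have : ∑' j, μ (E j) = ENNReal.ofReal (∑' j, r j) := by
    rw [ENNReal.ofReal_tsum_of_nonneg hr_nonneg hrsum]
    congr 1
    funext j
    exact hμE j
  rw [this, ENNReal.toReal_ofReal (tsum_nonneg hr_nonneg), hfinal]
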